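/- Let n ≥ m−1 and let w be a non-empty common finite prefix of the two infinite words z_{n−(m−1)} · Q(n+1) Q(n+2) Q(n+3) ⋯ and Q(n+2) Q(n+3) Q(n+4) ⋯. Then Q(n+1) · w is not a palindrome. -/

import Mathlib

/-- The finite word `u` occurs at position `j` in the infinite word `w`. -/
def OccursAt (u : List ℕ) (w : ℕ → ℕ) (j : ℕ) : Prop :=
  ∀ i < u.length, w (j + i) = u.getD i 0

/-- The finite word `u` is a prefix of the infinite word `w`. -/
def InfPrefix (u : List ℕ) (w : ℕ → ℕ) : Prop :=
  OccursAt u w 0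

/-- The suffix of the infinite word `w` starting at position `j`. -/
def suffixFrom (w : ℕ → ℕ) (j : ℕ) : ℕ → ℕ :=
  fun i => w (j + i)

/-- The finite word `u` is a palindrome. -/
def Pal (u : List ℕ) : Prop := u.reverse = u
/-- The `m`-bonacci morphism `φ_m` on letters:
`φ_m(k) = 0·(k+1)` for `0 ≤ k ≤ m-2`, and `φ_m(m-1) = 0`. -/
def phiL (m a : ℕ) : List ℕ := if a = m - 1 then [0] else [0, a + 1]

/-- The `m`-bonacci morphism applied to a finite word. -/
def phiW (m : ℕ) (u : List ℕ) : List ℕ := u.flatMap (phiL m)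

/-- The iterates `h n = φ_mⁿ(0)`. -/
def hword (m : ℕ) : ℕ → List ℕ
  | 0 => [0]
  | n + 1 => phiW m (hword m n)

/-- The `m`-bonacci word, the infinite fixed point of `φ_m` beginning with `0`
(its `i`-th letter is the `i`-th letter of any sufficiently long iterate `φ_mⁿ(0)`). -/
def mbon (m : ℕ) : ℕ → ℕ := fun i => (hword m (i + 1)).getD i 0

/-- Auxiliary course-of-values construction for the p-singular words:
`zsAux m (k+1) i` gives the correct value of the (index-shifted) p-singular word
`z_{i-1}` for every `i ≤ k`. -/
def zsAux (m : ℕ) : ℕ → ℕ → List ℕ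
  | 0, _ => []
  | k + 1, i =>
    if i < k then zsAux m k i
    else if i = 0 then []
    else if i = 1 then [0]
    else if i ≤ m then
      -- here `i = n+1` with `1 ≤ n ≤ m-1`:
      -- `z_n = z_{n-2} z_{n-3} ⋯ z_1 z_0 · n · z_0 z_1 ⋯ z_{n-3} z_{n-2}`
      (((List.range (i - 2)).map (fun j => zsAux m k (i - 2 - j))).flatten)
        ++ [i - 1]
        ++ (((List.range (i - 2)).map (fun j => zsAux m k (1 + j))).flatten)
    else
      -- here `i = n+1` with `n ≥ m`:
      -- `z_n = z_{n-2} ⋯ z_{n-(m-1)} · z_{n-m} · z_{n-(m+1)} · z_{n-m} · z_{n-(m-1)} ⋯ z_{n-2}`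
      (((List.range (m - 2)).map (fun j => zsAux m k (i - 2 - j))).flatten)
        ++ zsAux m k (i - m) ++ zsAux m k (i - m - 1) ++ zsAux m k (i - m)
        ++ (((List.range (m - 2)).map (fun j => zsAux m k (i - m + 1 + j))).flatten)

/-- The (index-shifted) p-singular words for the `m`-bonacci word:
`zsw m 0 = z₋₁ = ε`, and `zsw m (n+1) = zₙ` for `n ≥ 0`, where
`z₀ = 0`, `zₙ = z_{n-2} z_{n-3} ⋯ z_1 z_0 · n · z_0 z_1 ⋯ z_{n-3} z_{n-2}` for `1 ≤ n ≤ m-1`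
(`n` denoting the single letter `n`), and
`zₙ = z_{n-2} z_{n-3} ⋯ z_{n-(m-1)} z_{n-m} z_{n-(m+1)} z_{n-m} z_{n-(m-1)} ⋯ z_{n-3} z_{n-2}`
for `n ≥ m`. -/
def zsw (m k : ℕ) : List ℕ := zsAux m (k + 1) k
/-- For `n ≥ m-2`, `Qword m n` is the word
`Q(n) = z_{n-(m-1)} z_{n-(m-2)} ⋯ z_{n-1} zₙ z_{n-1} ⋯ z_{n-(m-2)} z_{n-(m-1)}`
(in the shifted indexing `zₖ = zsw m (k+1)`). -/
def Qword (m n : ℕ) : List ℕ :=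
  (((List.range (m - 1)).map (fun j => zsw m (n + 2 - m + j))).flatten)
    ++ zsw m (n + 1)
    ++ (((List.range (m - 1)).map (fun j => zsw m (n - j))).flatten)

/-- The word `p_m = z_0 z_1 ⋯ z_{m-3} z_{m-2} z_{m-3} ⋯ z_1 z_0 · (m-1)`. -/
def pword (m : ℕ) : List ℕ :=
  (((List.range (m - 2)).map (fun j => zsw m (j + 1))).flatten)
    ++ zsw m (m - 1)
    ++ (((List.range (m - 2)).map (fun j => zsw m (m - 2 - j))).flatten)
    ++ [m - 1]

/-- For `n ≥ m-2`, the prefix `g_n = p_m · ∏_{m-2 ≤ k ≤ n-1} Q(k)` of the `m`-bonacci word. -/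
def gwordM (m n : ℕ) : List ℕ :=
  pword m ++ (((List.range (n - (m - 2))).map (fun j => Qword m (m - 2 + j))).flatten)

-- === Part 1: zsw recursion lemmas ===
lemma zsAux_stable (m k i : ℕ) (h : i < k) : zsAux m (k+1) i = zsAux m k i := by
  rw [zsAux, if_pos h]

lemma zsAux_eq_zsw (m : ℕ) : ∀ K j, j < K → zsAux m K j = zsw m j := by
  intro K
  induction K with
  | zero => intro j h; omega
  | succ K ih =>
    intro j h
    rcases Nat.lt_or_ge j K with h' | h'
    · rw [zsAux_stable m K j h', ih j h']
    · have : j = K := by omega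
      subst this
      rfl

/-- ascending chain `ζ s ζ (s+1) ⋯ ζ (s+j-1)` -/
def ascZ (m s j : ℕ) : List ℕ := ((List.range j).map (fun t => zsw m (s + t))).flatten

/-- descending chain `ζ s ζ (s-1) ⋯ ζ (s-j+1)` -/
def descZ (m s j : ℕ) : List ℕ := ((List.range j).map (fun t => zsw m (s - t))).flatten

lemma zsw_zero (m : ℕ) : zsw m 0 = [] := rfl

lemma zsw_one (m : ℕ) : zsw m 1 = [0] := rfl

lemma zsw_two (m : ℕ) (hm : 2 ≤ m) : zsw m 2 = [1] := by
  show zsAux m 3 2 = [1]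
  rw [zsAux]
  simp [hm]

lemma zsw_mid (m i : ℕ) (h3 : 3 ≤ i) (him : i ≤ m) :
    zsw m i = descZ m (i-2) (i-2) ++ [i-1] ++ ascZ m 1 (i-2) := by
  show zsAux m (i+1) i = _
  rw [zsAux]
  rw [if_neg (by omega), if_neg (by omega), if_neg (by omega), if_pos him]
  unfold descZ ascZ
  have e1 : (List.range (i-2)).map (fun j => zsAux m i (i-2-j))
      = (List.range (i-2)).map (fun t => zsw m (i-2-t)) := by
    apply List.map_congr_left
    intro j hj
    have hj' : j < i - 2 := List.mem_range.mp hj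
    rw [zsAux_eq_zsw m i (i-2-j) (by omega)]
  have e2 : (List.range (i-2)).map (fun j => zsAux m i (1+j))
      = (List.range (i-2)).map (fun t => zsw m (1+t)) := by
    apply List.map_congr_left
    intro j hj
    have hj' : j < i - 2 := List.mem_range.mp hj
    rw [zsAux_eq_zsw m i (1+j) (by omega)]
  rw [e1, e2]

lemma zsw_gt (m i : ℕ) (hm : 2 ≤ m) (him : m + 1 ≤ i) :
    zsw m i = descZ m (i-2) (m-2) ++ zsw m (i-m) ++ zsw m (i-m-1) ++ zsw m (i-m)
      ++ ascZ m (i-m+1) (m-2) := by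
  show zsAux m (i+1) i = _
  rw [zsAux]
  rw [if_neg (by omega), if_neg (by omega), if_neg (by omega), if_neg (by omega)]
  unfold descZ ascZ
  rw [zsAux_eq_zsw m i (i-m) (by omega), zsAux_eq_zsw m i (i-m-1) (by omega)]
  have e1 : (List.range (m-2)).map (fun j => zsAux m i (i-2-j))
      = (List.range (m-2)).map (fun t => zsw m (i-2-t)) := by
    apply List.map_congr_left
    intro j hj
    have hj' : j < m - 2 := List.mem_range.mp hj
    rw [zsAux_eq_zsw m i (i-2-j) (by omega)]
  have e2 : (List.range (m-2)).map (fun j => zsAux m i (i-m+1+j))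
      = (List.range (m-2)).map (fun t => zsw m (i-m+1+t)) := by
    apply List.map_congr_left
    intro j hj
    have hj' : j < m - 2 := List.mem_range.mp hj
    rw [zsAux_eq_zsw m i (i-m+1+j) (by omega)]
  rw [e1, e2]
-- === Part 2: chain lemmas ===
lemma ascZ_zero (m s : ℕ) : ascZ m s 0 = [] := rfl
lemma descZ_zero (m s : ℕ) : descZ m s 0 = [] := rfl
lemma ascZ_one (m s : ℕ) : ascZ m s 1 = zsw m s := by
  unfold ascZ
  rw [List.range_succ]
  simp

lemma ascZ_succ (m s j : ℕ) : ascZ m s (j+1) = ascZ m s j ++ zsw m (s+j) := by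
  unfold ascZ
  rw [List.range_succ, List.map_append, List.flatten_append]
  simp

lemma descZ_succ (m s j : ℕ) : descZ m s (j+1) = descZ m s j ++ zsw m (s-j) := by
  unfold descZ
  rw [List.range_succ, List.map_append, List.flatten_append]
  simp

lemma ascZ_cons (m s j : ℕ) : ascZ m s (j+1) = zsw m s ++ ascZ m (s+1) j := by
  unfold ascZ
  rw [List.range_succ_eq_map, List.map_cons, List.flatten_cons, List.map_map]
  have e : List.map ((fun t => zsw m (s+t)) ∘ Nat.succ) (List.range j)
      = List.map (fun t => zsw m (s+1+t)) (List.range j) := by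
    apply List.map_congr_left
    intro t _
    simp only [Function.comp_apply]
    congr 1
    omega
  rw [e]
  simp [ascZ]

lemma descZ_cons (m s j : ℕ) : descZ m s (j+1) = zsw m s ++ descZ m (s-1) j := by
  unfold descZ
  rw [List.range_succ_eq_map, List.map_cons, List.flatten_cons, List.map_map]
  have e : List.map ((fun t => zsw m (s-t)) ∘ Nat.succ) (List.range j)
      = List.map (fun t => zsw m (s-1-t)) (List.range j) := by
    apply List.map_congr_left
    intro t _
    simp only [Function.comp_apply]
    congr 1
    omega
  rw [e]
  simp [descZ]

-- === prefix fact: ζ(k+2) = ζ k ++ r ===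
lemma zsw_pre (m k : ℕ) (hm : 2 ≤ m) (hk : 1 ≤ k) :
    ∃ r, zsw m (k+2) = zsw m k ++ r := by
  rcases Nat.lt_or_ge (k+2) (m+1) with h | h
  · -- k+2 ≤ m
    rw [zsw_mid m (k+2) (by omega) (by omega)]
    have h2 : k + 2 - 2 = k := by omega
    rw [h2]
    obtain ⟨k', rfl⟩ : ∃ k', k = k' + 1 := ⟨k - 1, by omega⟩
    rw [descZ_cons]
    exact ⟨descZ m (k'+1-1) k' ++ [k'+1+2-1] ++ ascZ m 1 (k'+1),
      by simp [List.append_assoc]⟩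
  · rcases Nat.lt_or_ge m 3 with hm2 | hm3
    · -- m = 2
      have hm' : m = 2 := by omega
      subst hm'
      rw [zsw_gt 2 (k+2) (by omega) (by omega)]
      have h2 : k + 2 - 2 = k := by omega
      simp only [h2, show (2:ℕ)-2 = 0 from rfl, descZ_zero, ascZ_zero]
      exact ⟨zsw 2 (k+2-2-1) ++ zsw 2 (k+2-2) ++ [], by
        simp only [List.nil_append, List.append_nil, h2, List.append_assoc]⟩
    · rw [zsw_gt m (k+2) hm (by omega)]
      have h2 : k + 2 - 2 = k := by omega
      rw [h2]
      obtain ⟨m', hm'⟩ : ∃ m', m = m' + 3 := ⟨m - 3, by omega⟩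
      have hmm : m - 2 = m' + 1 := by omega
      rw [hmm, descZ_cons]
      exact ⟨descZ m (k-1) m' ++ zsw m (k+2-m) ++ zsw m (k+2-m-1) ++ zsw m (k+2-m)
        ++ ascZ m (k+2-m+1) (m'+1), by simp [List.append_assoc]⟩

lemma zsw_ne_nil (m k : ℕ) (hm : 2 ≤ m) (hk : 1 ≤ k) : zsw m k ≠ [] := by
  induction k using Nat.strong_induction_on with
  | _ k ih =>
    rcases Nat.lt_or_ge k 3 with h | h
    · interval_cases k
      · simp [zsw_one]
      · rw [zsw_two m hm]; simp
    · obtain ⟨k', rfl⟩ : ∃ k', k = k' + 2 := ⟨k - 2, by omega⟩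
      obtain ⟨r, hr⟩ := zsw_pre m k' hm (by omega)
      rw [hr]
      have := ih k' (by omega) (by omega)
      simp [this]

lemma zsw_len_pos (m k : ℕ) (hm : 2 ≤ m) (hk : 1 ≤ k) : 1 ≤ (zsw m k).length := by
  have := zsw_ne_nil m k hm hk
  cases h : zsw m k with
  | nil => exact absurd h this
  | cons a l => simp [h]

lemma zsw_head (m k : ℕ) (hm : 2 ≤ m) (hk : 1 ≤ k) :
    (zsw m k).getD 0 0 = (k+1) % 2 := by
  induction k using Nat.strong_induction_on with
  | _ k ih =>
    rcases Nat.lt_or_ge k 3 with h | h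
    · interval_cases k
      · simp [zsw_one]
      · rw [zsw_two m hm]; rfl
    · obtain ⟨k', rfl⟩ : ∃ k', k = k' + 2 := ⟨k - 2, by omega⟩
      obtain ⟨r, hr⟩ := zsw_pre m k' hm (by omega)
      rw [hr, List.getD_append _ _ _ _ (zsw_len_pos m k' hm (by omega))]
      rw [ih k' (by omega) (by omega)]
      omega
-- === Part 3: palindromes ===
lemma ascZ_rev (m s j : ℕ) (h : ∀ t < j, (zsw m (s+t)).reverse = zsw m (s+t)) :
    (ascZ m s j).reverse = descZ m (s+j-1) j := by
  induction j with
  | zero => simp [ascZ_zero, descZ_zero]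
  | succ j ih =>
    rw [ascZ_succ, List.reverse_append, h j (by omega),
      ih (fun t ht => h t (by omega))]
    have h1 : descZ m (s+(j+1)-1) (j+1) = zsw m (s+j) ++ descZ m (s+j-1) j := by
      have e1 : s + (j+1) - 1 = s + j := by omega
      have e2 : s + j - 1 = s + j - 1 := rfl
      rw [e1, descZ_cons]
    rw [h1]

lemma descZ_rev (m s j : ℕ) (hjs : j ≤ s)
    (h : ∀ t < j, (zsw m (s-t)).reverse = zsw m (s-t)) :
    (descZ m s j).reverse = ascZ m (s+1-j) j := by
  induction j with
  | zero => simp [ascZ_zero, descZ_zero]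
  | succ j ih =>
    rw [descZ_succ, List.reverse_append, h j (by omega),
      ih (by omega) (fun t ht => h t (by omega))]
    have h1 : ascZ m (s+1-(j+1)) (j+1) = zsw m (s-j) ++ ascZ m (s+1-j) j := by
      have e1 : s + 1 - (j+1) = s - j := by omega
      have e2 : s - j + 1 = s + 1 - j := by omega
      rw [e1, ascZ_cons, e2]
    rw [h1]

lemma zsw_pal (m : ℕ) (hm : 2 ≤ m) : ∀ k, (zsw m k).reverse = zsw m k := by
  intro k
  induction k using Nat.strong_induction_on with
  | _ k ih =>
    rcases Nat.lt_or_ge k 3 with h | h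
    · interval_cases k
      · rfl
      · rfl
      · rw [zsw_two m hm]
        rfl
    · rcases Nat.lt_or_ge k (m+1) with h2 | h2
      · rw [zsw_mid m k (by omega) (by omega)]
        rw [List.append_assoc, List.reverse_append, List.reverse_append]
        rw [ascZ_rev m 1 (k-2) (fun t ht => ih (1+t) (by omega))]
        rw [descZ_rev m (k-2) (k-2) (by omega) (fun t ht => ih ((k-2)-t) (by omega))]
        have e1 : 1 + (k-2) - 1 = k - 2 := by omega
        have e2 : (k-2) + 1 - (k-2) = 1 := by omega
        rw [e1, e2]
        simp [List.append_assoc]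
      · rw [zsw_gt m k hm (by omega)]
        simp only [List.append_assoc, List.reverse_append]
        rw [ascZ_rev m (k-m+1) (m-2) (fun t ht => ih (k-m+1+t) (by omega))]
        rw [descZ_rev m (k-2) (m-2) (by omega) (fun t ht => ih ((k-2)-t) (by omega))]
        rw [ih (k-m) (by omega), ih (k-m-1) (by omega)]
        have e1 : (k-m+1) + (m-2) - 1 = k - 2 := by omega
        have e2 : (k-2) + 1 - (m-2) = k-m+1 := by omega
        rw [e1, e2]
-- === Part 4: morphism relation ===
/-- parity correction word -/
def deltaW (j : ℕ) : List ℕ := if j % 2 = 0 then [0] else []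

lemma deltaW_add_two (i : ℕ) : deltaW (i+2) = deltaW i := by
  simp [deltaW, Nat.add_mod_right]

lemma phiW_nil (m : ℕ) : phiW m [] = [] := rfl
lemma phiW_cons (m c : ℕ) (u : List ℕ) : phiW m (c :: u) = phiL m c ++ phiW m u := rfl
lemma phiW_append (m : ℕ) (u v : List ℕ) : phiW m (u ++ v) = phiW m u ++ phiW m v := by
  simp [phiW]

lemma ascZ_rel (m s : ℕ) : ∀ j,
    (∀ t < j, ∀ rest, phiW m (zsw m (s+t)) ++ (deltaW (s+t) ++ rest)
      = deltaW (s+t+1) ++ (zsw m (s+t+1) ++ rest)) →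
    ∀ rest, phiW m (ascZ m s j) ++ (deltaW (s+j+1) ++ rest)
      = deltaW (s+1) ++ (ascZ m (s+1) j ++ rest) := by
  intro j
  induction j with
  | zero => intro _ rest; simp [ascZ_zero, phiW_nil]
  | succ j ih =>
    intro h rest
    rw [ascZ_succ, phiW_append, List.append_assoc]
    have e1 : s + (j+1) + 1 = (s+j) + 2 := by omega
    rw [e1, deltaW_add_two]
    rw [h j (by omega) rest]
    have e2 : s + j + 1 = s + (j+1) := by omega
    rw [ih (fun t ht rest' => h t (by omega) rest') (zsw m (s+j+1) ++ rest)]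
    rw [ascZ_succ]
    have e3 : s + 1 + j = s + j + 1 := by omega
    rw [e3]
    simp [List.append_assoc]

lemma descZ_rel (m s : ℕ) : ∀ j, j ≤ s →
    (∀ t < j, ∀ rest, phiW m (zsw m (s-t)) ++ (deltaW (s-t) ++ rest)
      = deltaW (s-t+1) ++ (zsw m (s-t+1) ++ rest)) →
    ∀ rest, phiW m (descZ m s j) ++ (deltaW (s+1-j) ++ rest)
      = deltaW (s+1) ++ (descZ m (s+1) j ++ rest) := by
  intro j
  induction j with
  | zero => intro _ _ rest; simp [descZ_zero, phiW_nil]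
  | succ j ih =>
    intro hjs h rest
    rw [descZ_succ, phiW_append, List.append_assoc]
    have e1 : s + 1 - (j+1) = s - j := by omega
    rw [e1]
    rw [h j (by omega) rest]
    have e2 : s - j + 1 = s + 1 - j := by omega
    rw [e2]
    rw [ih (by omega) (fun t ht rest' => h t (by omega) rest') (zsw m (s+1-j) ++ rest)]
    rw [descZ_succ]
    simp [List.append_assoc]

lemma relW (m : ℕ) (hm : 2 ≤ m) :
    ∀ k, phiW m (zsw m k) ++ deltaW k = deltaW (k+1) ++ zsw m (k+1) := by
  intro k
  induction k using Nat.strong_induction_on with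
  | _ k ih =>
    have ih' : ∀ i < k, ∀ rest, phiW m (zsw m i) ++ (deltaW i ++ rest)
        = deltaW (i+1) ++ (zsw m (i+1) ++ rest) := by
      intro i hi rest
      rw [← List.append_assoc, ih i hi, List.append_assoc]
    rcases Nat.lt_or_ge k 3 with h | h
    · interval_cases k
      · -- k = 0
        show phiW m [] ++ deltaW 0 = deltaW 1 ++ zsw m 1
        simp [phiW_nil, deltaW, zsw_one]
      · -- k = 1
        show phiW m [0] ++ deltaW 1 = deltaW 2 ++ zsw m 2
        rw [zsw_two m hm]
        have : phiL m 0 = [0, 1] := by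
          unfold phiL
          rw [if_neg (by omega)]
        simp [phiW_cons, phiW_nil, this, deltaW]
      · -- k = 2
        rw [zsw_two m hm]
        rcases Nat.lt_or_ge m 3 with hm2 | hm3
        · have hm' : m = 2 := by omega
          subst hm'
          show phiW 2 [1] ++ deltaW 2 = deltaW 3 ++ zsw 2 3
          rw [zsw_gt 2 3 (by omega) (by omega)]
          simp [phiW_cons, phiW_nil, phiL, deltaW, descZ_zero, ascZ_zero, zsw_one, zsw_zero]
        · show phiW m [1] ++ deltaW 2 = deltaW 3 ++ zsw m 3
          rw [zsw_mid m 3 (by omega) (by omega)]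
          have h1 : phiL m 1 = [0, 2] := by
            unfold phiL
            rw [if_neg (by omega)]
          have h2 : descZ m 1 1 = zsw m 1 := by
            unfold descZ
            rw [List.range_succ]
            simp
          rw [show (3:ℕ)-2 = 1 from rfl, show (3:ℕ)-1 = 2 from rfl, h2, ascZ_one, zsw_one]
          simp [phiW_cons, phiW_nil, h1, deltaW]
    · rcases Nat.lt_or_ge k m with hkm | hkm
      · -- 3 ≤ k ≤ m-1 : letter case, k+1 ≤ m
        rw [zsw_mid m k (by omega) (by omega), zsw_mid m (k+1) (by omega) (by omega)]
        rw [phiW_append, phiW_append, List.append_assoc, List.append_assoc]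
        have hA := ascZ_rel m 1 (k-2) (fun t ht rest => ih' (1+t) (by omega) rest) []
        simp only [List.append_nil] at hA
        have e1 : 1 + (k-2) + 1 = k := by omega
        rw [e1] at hA
        rw [hA]
        have hphiW : phiW m [k-1] = [0] ++ [k] := by
          rw [phiW_cons, phiW_nil, List.append_nil]
          unfold phiL
          rw [if_neg (by omega)]
          congr 2
          omega
        rw [hphiW]
        have hdel2 : deltaW (1+1) = [0] := by simp [deltaW]
        rw [hdel2, List.append_assoc]
        have hD := descZ_rel m (k-2) (k-2) (by omega)
          (fun t ht rest => ih' ((k-2)-t) (by omega) rest)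
          ([0] ++ ([k] ++ ([0] ++ ascZ m (1+1) (k-2))))
        have e2 : k - 2 + 1 - (k-2) = 1 := by omega
        rw [e2, show deltaW 1 = [] from by simp [deltaW], List.nil_append] at hD
        simp only [List.append_assoc]
        rw [hD]
        -- now reassemble chains on the RHS
        have e3 : k + 1 - 2 = (k-2) + 1 := by omega
        have e4 : k + 1 - 1 = k := by omega
        rw [e3, e4, descZ_succ, ascZ_cons]
        have e5 : k - 2 + 1 - (k-2) = 1 := by omega
        have e6 : deltaW (k-2+1) = deltaW (k+1) := by
          have : k + 1 = (k - 2 + 1) + 2 := by omega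
          rw [this, deltaW_add_two]
        rw [e5, e6, zsw_one]
        simp [List.append_assoc]
      · rcases Nat.lt_or_ge k (m+1) with hkm1 | hkm1
        · -- k = m
          obtain rfl : m = k := by omega
          rw [zsw_mid m m (by omega) (by omega), zsw_gt m (m+1) hm (by omega)]
          rw [phiW_append, phiW_append, List.append_assoc, List.append_assoc]
          have hA := ascZ_rel m 1 (m-2) (fun t ht rest => ih' (1+t) (by omega) rest) []
          simp only [List.append_nil] at hA
          have e1 : 1 + (m-2) + 1 = m := by omega
          rw [e1] at hA
          rw [hA]
          have hphiW : phiW m [m-1] = [0] := by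
            rw [phiW_cons, phiW_nil, List.append_nil]
            unfold phiL
            rw [if_pos rfl]
          rw [hphiW]
          have hdel2 : deltaW (1+1) = [0] := by simp [deltaW]
          rw [hdel2]
          have hD := descZ_rel m (m-2) (m-2) (by omega)
            (fun t ht rest => ih' ((m-2)-t) (by omega) rest)
            ([0] ++ ([0] ++ ascZ m (1+1) (m-2)))
          have e2 : m - 2 + 1 - (m-2) = 1 := by omega
          rw [e2, show deltaW 1 = [] from by simp [deltaW], List.nil_append] at hD
          simp only [List.append_assoc]
          rw [hD]
          -- RHS indices
          have e3 : m + 1 - 2 = m - 2 + 1 := by omega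
          have e4 : m + 1 - m - 1 = 0 := by omega
          have e5 : m + 1 - m + 1 = 1 + 1 := by omega
          have e6 : m + 1 - m = 1 := by omega
          rw [e3, e4, e5, e6, zsw_one, zsw_zero]
          have e7 : deltaW (m-2+1) = deltaW (m+1) := by
            have : m + 1 = (m - 2 + 1) + 2 := by omega
            rw [this, deltaW_add_two]
          rw [e7]
          have e8 : m - 2 + 1 - 1 = m - 2 := by omega
          simp [List.append_assoc]
        · -- k ≥ m+1
          rw [zsw_gt m k hm (by omega), zsw_gt m (k+1) hm (by omega)]
          rw [phiW_append, phiW_append, phiW_append, phiW_append]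
          simp only [List.append_assoc]
          have hA := ascZ_rel m (k-m+1) (m-2)
            (fun t ht rest => ih' (k-m+1+t) (by omega) rest) []
          simp only [List.append_nil] at hA
          have e1 : (k-m+1) + (m-2) + 1 = k := by omega
          rw [e1] at hA
          rw [hA]
          have e2 : deltaW (k-m+1+1) = deltaW (k-m) := by
            have : k - m + 1 + 1 = (k - m) + 2 := by omega
            rw [this, deltaW_add_two]
          rw [e2] at hA ⊢
          rw [ih' (k-m) (by omega)]
          have e3 : deltaW (k-m+1) = deltaW (k-m-1) := by
            have : k - m + 1 = (k - m - 1) + 2 := by omega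
            rw [this, deltaW_add_two]
          rw [e3, ih' (k-m-1) (by omega)]
          have e4 : k - m - 1 + 1 = k - m := by omega
          rw [e4, ih' (k-m) (by omega)]
          have hD := descZ_rel m (k-2) (m-2) (by omega)
            (fun t ht rest => ih' ((k-2)-t) (by omega) rest)
            (zsw m (k-m+1) ++ (zsw m (k-m) ++ (zsw m (k-m+1) ++ ascZ m (k-m+2) (m-2))))
          have e5 : k - 2 + 1 - (m-2) = k - m + 1 := by omega
          rw [e5] at hD
          have e6 : ascZ m (k-m+1+1) (m-2) = ascZ m (k-m+2) (m-2) := by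
            have : k - m + 1 + 1 = k - m + 2 := by omega
            rw [this]
          rw [e6, hD]
          -- RHS indices
          have f1 : k + 1 - 2 = k - 2 + 1 := by omega
          have f2 : k + 1 - m = k - m + 1 := by omega
          have f3 : k + 1 - m - 1 = k - m := by omega
          have f4 : k + 1 - m + 1 = k - m + 2 := by omega
          have f5 : deltaW (k+1) = deltaW (k-2+1) := by
            have e : k + 1 = (k - 2 + 1) + 2 := by omega
            rw [e, deltaW_add_two]
          rw [f1, f3, f4, f2, f5]
-- === Part 5: code lemmas ===
lemma phiL_len_pos (m c : ℕ) : 1 ≤ (phiL m c).length := by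
  unfold phiL
  split <;> simp

lemma phiL_len_le (m c : ℕ) : (phiL m c).length ≤ 2 := by
  unfold phiL
  split <;> simp

lemma phiW_len_ge (m : ℕ) (u : List ℕ) : u.length ≤ (phiW m u).length := by
  induction u with
  | nil => simp [phiW_nil]
  | cons c u ih =>
    rw [phiW_cons, List.length_append, List.length_cons]
    have := phiL_len_pos m c
    omega

lemma phiW_getD_zero (m : ℕ) (v : List ℕ) : (phiW m v).getD 0 0 = 0 := by
  cases v with
  | nil => simp [phiW_nil]
  | cons c v =>
    rw [phiW_cons]
    unfold phiL
    split <;> simp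

lemma getD_append_zero (u v : List ℕ) (h : (u ++ v).getD 0 0 = 0 → False)
    (hu : u.getD 0 0 = 0) (hv : v.getD 0 0 = 0) : False := by
  cases u with
  | nil => exact h (by simpa using hv)
  | cons a u => exact h (by simpa using hu)

lemma phiW_append_zero_getD (m : ℕ) (v : List ℕ) : (phiW m v ++ [0]).getD 0 0 = 0 := by
  cases hv : phiW m v with
  | nil => simp
  | cons a l =>
    have := phiW_getD_zero m v
    rw [hv] at this
    simpa using this

lemma phiW_after (m : ℕ) : ∀ (v : List ℕ) (i : ℕ),
    (phiW m v).getD i 0 ≠ 0 → (phiW m v).getD (i+1) 0 = 0 := by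
  intro v
  induction v with
  | nil => intro i h; simp [phiW_nil] at h
  | cons c v ih =>
    intro i h
    rw [phiW_cons] at h ⊢
    by_cases hc : c = m - 1
    · rw [show phiL m c = [0] from by unfold phiL; rw [if_pos hc]] at h ⊢
      cases i with
      | zero => simp at h
      | succ j =>
        have h' : (phiW m v).getD j 0 ≠ 0 := by simpa using h
        simpa using ih j h'
    · rw [show phiL m c = [0, c+1] from by unfold phiL; rw [if_neg hc]] at h ⊢
      match i with
      | 0 => simp at h
      | 1 =>
        have := phiW_getD_zero m v
        simpa using this
      | (j+2) =>
        have h' : (phiW m v).getD j 0 ≠ 0 := by simpa using h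
        simpa using ih j h'

lemma prefix_getD (u v : List ℕ) (h : u <+: v) (i : ℕ) (hi : i < u.length) :
    u.getD i 0 = v.getD i 0 := by
  obtain ⟨t, rfl⟩ := h
  rw [List.getD_append _ _ _ _ hi]

lemma phiW_code (m : ℕ) (hm : 2 ≤ m) : ∀ (x y : List ℕ),
    (phiW m x ++ [0]) <+: (phiW m y ++ [0]) → x <+: y := by
  intro x
  induction x with
  | nil => intro y _; exact List.nil_prefix
  | cons c x ih =>
    intro y h
    cases y with
    | nil =>
      exfalso
      have hlen := h.length_le
      rw [phiW_cons, phiW_nil] at hlen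
      have h1 := phiL_len_pos m c
      simp [List.length_append] at hlen
      omega
    | cons d y =>
      rw [phiW_cons, phiW_cons, List.append_assoc, List.append_assoc] at h
      by_cases hc : c = m - 1 <;> by_cases hd : d = m - 1
      · rw [show phiL m c = [0] from by unfold phiL; rw [if_pos hc]] at h
        rw [show phiL m d = [0] from by unfold phiL; rw [if_pos hd]] at h
        simp only [List.cons_append, List.nil_append, List.cons_prefix_cons] at h
        have := ih y h.2
        rw [hc, hd]
        exact List.cons_prefix_cons.mpr ⟨rfl, this⟩
      · exfalso
        rw [show phiL m c = [0] from by unfold phiL; rw [if_pos hc]] at h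
        rw [show phiL m d = [0, d+1] from by unfold phiL; rw [if_neg hd]] at h
        simp only [List.cons_append, List.nil_append, List.cons_prefix_cons] at h
        have h2 := h.2
        have hne : (phiW m x ++ [0]) ≠ [] := by simp
        have := prefix_getD _ _ h2 0 (by
          cases hx : phiW m x ++ [0] with
          | nil => exact absurd hx hne
          | cons a l => simp)
        rw [phiW_append_zero_getD] at this
        simp at this
      · exfalso
        rw [show phiL m c = [0, c+1] from by unfold phiL; rw [if_neg hc]] at h
        rw [show phiL m d = [0] from by unfold phiL; rw [if_pos hd]] at h
        simp only [List.cons_append, List.nil_append, List.cons_prefix_cons] at h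
        have h2 := h.2
        have := prefix_getD _ _ h2 0 (by simp)
        rw [phiW_append_zero_getD m y] at this
        simp at this
      · rw [show phiL m c = [0, c+1] from by unfold phiL; rw [if_neg hc]] at h
        rw [show phiL m d = [0, d+1] from by unfold phiL; rw [if_neg hd]] at h
        simp only [List.cons_append, List.nil_append, List.cons_prefix_cons] at h
        obtain ⟨_, hcd, htail⟩ := h
        have hcd' : c = d := by omega
        rw [hcd']
        exact List.cons_prefix_cons.mpr ⟨rfl, ih y htail⟩

lemma phiW_singleton (m c : ℕ) : phiW m [c] = phiL m c := by
  rw [phiW_cons, phiW_nil, List.append_nil]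

lemma phiW_align (m : ℕ) : ∀ (u : List ℕ) (l : ℕ), 1 ≤ l → l ≤ (phiW m u).length →
    ((phiW m u).getD ((phiW m u).length - l) 0 ≠ 0) ∨
    (∃ u₂, u₂ <:+ u ∧ (phiW m u₂).length = l ∧
      (phiW m u).drop ((phiW m u).length - l) = phiW m u₂) := by
  intro u
  induction u using List.reverseRecOn with
  | nil =>
    intro l h1 h2
    rw [phiW_nil] at h2
    simp at h2
    omega
  | append_singleton u' c ih =>
    intro l h1 h2
    rw [phiW_append, phiW_singleton] at h2 ⊢
    have hlp := phiL_len_pos m c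
    have hll := phiL_len_le m c
    rw [List.length_append] at h2 ⊢
    rcases Nat.lt_or_ge (phiL m c).length l with hl | hl
    · -- recurse into u'
      rcases ih (l - (phiL m c).length) (by omega) (by omega)
        with hmis | ⟨u₂, hsuf, hlen, hdrop⟩
      · left
        have e : (phiW m u').length + (phiL m c).length - l
            = (phiW m u').length - (l - (phiL m c).length) := by omega
        rw [e, List.getD_append _ _ _ _ (by omega)]
        exact hmis
      · right
        refine ⟨u₂ ++ [c], ?_, ?_, ?_⟩
        · obtain ⟨t, rfl⟩ := hsuf
          exact ⟨t, by simp⟩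
        · rw [phiW_append, List.length_append, hlen, phiW_singleton]
          omega
        · have e : (phiW m u').length + (phiL m c).length - l
              = (phiW m u').length - (l - (phiL m c).length) := by omega
          rw [e, List.drop_append_of_le_length (by omega), hdrop, phiW_append,
            phiW_singleton]
    · -- within the last codeword
      rcases Nat.lt_or_ge l (phiL m c).length with hl2 | hl2
      · -- l = 1 and phiL = [0, c+1]
        left
        have hc : ¬ (c = m - 1) := by
          intro hc
          rw [show phiL m c = [0] from by unfold phiL; rw [if_pos hc]] at hl2
          simp at hl2
          omega
        have hphi : phiL m c = [0, c+1] := by unfold phiL; rw [if_neg hc]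
        have hl1 : l = 1 := by
          rw [hphi] at hl2
          simp at hl2
          omega
        subst hl1
        rw [hphi]
        have e : (phiW m u').length + ([0, c+1] : List ℕ).length - 1
            = (phiW m u').length + 1 := by simp
        rw [e, List.getD_append_right _ _ _ _ (by omega)]
        simp
      · -- aligned on [c]
        have hleq : l = (phiL m c).length := by omega
        right
        refine ⟨[c], ⟨u', rfl⟩, ?_, ?_⟩
        · rw [phiW_singleton]
          omega
        · rw [hleq]
          have e : (phiW m u').length + (phiL m c).length - (phiL m c).length
              = (phiW m u').length := by omega
          rw [e, List.drop_append_of_le_length (le_refl _), phiW_singleton]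
          simp
-- === Part 6: helpers for S ===
lemma getD_drop' (u : List ℕ) (n i : ℕ) : (u.drop n).getD i 0 = u.getD (n+i) 0 := by
  simp [List.getD_eq_getElem?_getD, List.getElem?_drop]

lemma getD_take' (u : List ℕ) (n i : ℕ) (h : i < n) :
    (u.take n).getD i 0 = u.getD i 0 := by
  simp [List.getD_eq_getElem?_getD, List.getElem?_take, h]

lemma rev_drop_pal (u : List ℕ) (hpal : u.reverse = u) (n : ℕ) :
    (u.drop n).reverse = u.take (u.length - n) := by
  rw [List.reverse_drop, hpal]

lemma rev_take_pal (u : List ℕ) (hpal : u.reverse = u) (n : ℕ) :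
    (u.take n).reverse = u.drop (u.length - n) := by
  rw [List.reverse_take, hpal]

lemma zsw_cons (m k : ℕ) (hm : 2 ≤ m) (hk : 1 ≤ k) :
    ∃ u, zsw m k = ((k+1) % 2) :: u := by
  have h1 := zsw_head m k hm hk
  have h2 := zsw_ne_nil m k hm hk
  cases hz : zsw m k with
  | nil => exact absurd hz h2
  | cons a u =>
    rw [hz] at h1
    simp at h1
    exact ⟨u, by rw [h1]⟩

lemma zsw_last (m k : ℕ) (hm : 2 ≤ m) (hk : 1 ≤ k) :
    ∃ u, zsw m k = u ++ [(k+1) % 2] := by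
  obtain ⟨u, hu⟩ := zsw_cons m k hm hk
  refine ⟨u.reverse, ?_⟩
  conv_lhs => rw [← zsw_pal m hm k, hu]
  simp

lemma zsw_last_getD (m k : ℕ) (hm : 2 ≤ m) (hk : 1 ≤ k) :
    (zsw m k).getD ((zsw m k).length - 1) 0 = (k+1) % 2 := by
  obtain ⟨u, hu⟩ := zsw_last m k hm hk
  rw [hu]
  have : (u ++ [(k+1) % 2]).length - 1 = u.length := by simp
  rw [this, List.getD_append_right _ _ _ _ (le_refl _)]
  simp

lemma zsw_len_rel_even (m k : ℕ) (hm : 2 ≤ m) (hk : k % 2 = 0) :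
    (zsw m (k+1)).length = (phiW m (zsw m k)).length + 1 := by
  have h := congrArg List.length (relW m hm k)
  simp only [List.length_append] at h
  have h1 : (deltaW k).length = 1 := by simp [deltaW, hk]
  have h2 : (deltaW (k+1)).length = 0 := by
    simp [deltaW, Nat.succ_mod_two_eq_one_iff.mpr hk]
  omega

lemma zsw_len_rel_odd (m k : ℕ) (hm : 2 ≤ m) (hk : k % 2 = 1) :
    (phiW m (zsw m k)).length = (zsw m (k+1)).length + 1 := by
  have h := congrArg List.length (relW m hm k)
  simp only [List.length_append] at h
  have h1 : (deltaW k).length = 0 := by simp [deltaW, hk]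
  have h2 : (deltaW (k+1)).length = 1 := by
    have : (k+1) % 2 = 0 := by omega
    simp [deltaW, this]
  omega

lemma phiW_len_cons0 (m : ℕ) (hm : 2 ≤ m) (u : List ℕ) :
    (phiW m (0 :: u)).length = (phiW m u).length + 2 := by
  rw [phiW_cons]
  have : phiL m 0 = [0, 1] := by
    unfold phiL
    rw [if_neg (by omega)]
  rw [this]
  simp

lemma zsw_len_mono (m k : ℕ) (hm : 2 ≤ m) (hk : 1 ≤ k) :
    (zsw m k).length ≤ (zsw m (k+1)).length := by
  rcases Nat.even_or_odd k with he | ho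
  · have hk2 : k % 2 = 0 := Nat.even_iff.mp he
    have h := zsw_len_rel_even m k hm hk2
    have := phiW_len_ge m (zsw m k)
    omega
  · have hk2 : k % 2 = 1 := Nat.odd_iff.mp ho
    have h := zsw_len_rel_odd m k hm hk2
    obtain ⟨u, hu⟩ := zsw_cons m k hm hk
    have h0 : (k+1) % 2 = 0 := by omega
    rw [h0] at hu
    have h2 : (phiW m (zsw m k)).length = (phiW m u).length + 2 := by
      rw [hu]
      exact phiW_len_cons0 m hm u
    have h3 : u.length ≤ (phiW m u).length := phiW_len_ge m u
    have h4 : (zsw m k).length = u.length + 1 := by rw [hu]; simp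
    omega

-- extract "ends with 0" structure of a nonempty suffix of a word ending in 0
lemma suffix_ends_zero (u u₂ : List ℕ) (hsuf : u₂ <:+ u) (hne : u₂ ≠ [])
    (h0 : ∃ u₃, u = u₃ ++ [0]) : ∃ u₄, u₂ = u₄ ++ [0] := by
  obtain ⟨u₃, hu₃⟩ := h0
  obtain ⟨t, ht⟩ := hsuf
  rcases List.eq_nil_or_concat u₂ with h | ⟨u₄, a, hu₄⟩
  · exact absurd h hne
  · refine ⟨u₄, ?_⟩
    rw [List.concat_eq_append] at hu₄
    rw [hu₄] at ht
    rw [hu₃, ← List.append_assoc] at ht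
    have := (List.append_inj' ht (by simp)).2
    simp at this
    rw [hu₄, this]
-- === Part 7: the S lemma ===
lemma deltaW_even (j : ℕ) (h : j % 2 = 0) : deltaW j = [0] := by simp [deltaW, h]
lemma deltaW_odd (j : ℕ) (h : j % 2 = 1) : deltaW j = [] := by simp [deltaW, h]

/-- code-synchronization core: a suffix-piece of a `0`-ended word whose φ-image is a
prefix of another φ-image is a prefix of the preimage. -/
lemma code_core (m : ℕ) (hm : 2 ≤ m) (p q u₂ : List ℕ)
    (hpz : ∃ p₃, p = p₃ ++ [0])
    (hsuf : u₂ <:+ p) (hlen : 1 ≤ (phiW m u₂).length)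
    (htake : phiW m u₂ = (phiW m q).take (phiW m u₂).length) :
    u₂ <+: q := by
  set l := (phiW m u₂).length with hl
  have hne : u₂ ≠ [] := by
    intro h
    rw [h, phiW_nil] at hl
    simp at hl
    omega
  obtain ⟨u₄, hu₄⟩ := suffix_ends_zero p u₂ hsuf hne hpz
  have hphiL0 : phiL m 0 = [0, 1] := by
    unfold phiL
    rw [if_neg (by omega)]
  have hphi2 : phiW m u₂ = phiW m u₄ ++ [0, 1] := by
    rw [hu₄, phiW_append, phiW_singleton, hphiL0]
  have hlq : l ≤ (phiW m q).length := by
    have := congrArg List.length htake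
    rw [List.length_take] at this
    omega
  apply phiW_code m hm
  rcases Nat.lt_or_ge l (phiW m q).length with hlt | hge
  · -- strict: next letter in φ q is 0
    have hgd1 : (phiW m u₂).getD (l-1) 0 = 1 := by
      rw [hphi2]
      have hL : l = (phiW m u₄).length + 2 := by
        rw [hl, hphi2]
        simp
      have e : l - 1 = (phiW m u₄).length + 1 := by omega
      rw [e, List.getD_append_right _ _ _ _ (by omega)]
      simp
    have hgdq : (phiW m q).getD (l-1) 0 = 1 := by
      rw [htake] at hgd1
      rw [← getD_take' (phiW m q) l (l-1) (by omega)]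
      exact hgd1
    have hnext : (phiW m q).getD l 0 = 0 := by
      have := phiW_after m q (l-1) (by rw [hgdq]; omega)
      have e : l - 1 + 1 = l := by omega
      rwa [e] at this
    have hq_l : (phiW m q)[l]? = some 0 := by
      rw [List.getElem?_eq_getElem hlt]
      rw [← hnext, List.getD_eq_getElem _ _ hlt]
    have htake1 : (phiW m q ++ [0]).take (l+1) = phiW m u₂ ++ [0] := by
      rw [List.take_append_of_le_length (by omega), List.take_succ, hq_l, htake]
      simp
    rw [← htake1]
    exact List.take_prefix _ _
  · -- l = |φ q| : equal
    have : phiW m u₂ = phiW m q := by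
      rw [htake, List.take_of_length_le (by omega)]
    rw [this]

lemma slem (m : ℕ) (hm : 2 ≤ m) : ∀ k, 1 ≤ k → ∀ l, 1 ≤ l →
    l ≤ (zsw m k).length → l ≤ (zsw m (k+1)).length →
    (zsw m k).drop ((zsw m k).length - l) ≠ (zsw m (k+1)).take l := by
  intro k
  induction k using Nat.strong_induction_on with
  | _ k ih =>
    intro hk l hl1 hlk hlk1 heq
    rcases Nat.lt_or_ge k 2 with hk2 | hk2
    · -- base k = 1
      have hk1 : k = 1 := by omega
      subst hk1
      rw [zsw_one] at hlk heq
      rw [zsw_two m hm] at heq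
      have hl : l = 1 := by
        simp at hlk
        omega
      subst hl
      simp at heq
    · rcases Nat.even_or_odd k with he | ho
      · -- k even, k ≥ 2
        have hke : k % 2 = 0 := Nat.even_iff.mp he
        have hko : (k-1) % 2 = 1 := by omega
        -- the two morphism relations
        have hu : phiW m (zsw m (k-1)) = [0] ++ zsw m k := by
          have hr := relW m hm (k-1)
          rw [deltaW_odd _ hko, List.append_nil] at hr
          have e : k - 1 + 1 = k := by omega
          rw [e, deltaW_even _ hke] at hr
          exact hr
        have hv : phiW m (zsw m k) ++ [0] = zsw m (k+1) := by
          have hr := relW m hm k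
          rw [deltaW_even _ hke, deltaW_odd _ (by omega), List.nil_append] at hr
          exact hr
        have lphiu : (phiW m (zsw m (k-1))).length = (zsw m k).length + 1 := by
          rw [hu]
          simp
        have lphiv : (zsw m k).length ≤ (phiW m (zsw m k)).length := phiW_len_ge m _
        -- rewrite both sides of heq at the φ level
        have step1 : (phiW m (zsw m (k-1))).drop ((phiW m (zsw m (k-1))).length - l)
            = (zsw m k).drop ((zsw m k).length - l) := by
          rw [hu, List.singleton_append]
          have e : (0 :: zsw m k).length - l = ((zsw m k).length - l) + 1 := by
            simp
            omega
          rw [e, List.drop_succ_cons]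
        have step2 : (zsw m (k+1)).take l = (phiW m (zsw m k)).take l := by
          rw [← hv, List.take_append_of_le_length (by omega)]
        have E : (phiW m (zsw m (k-1))).drop ((phiW m (zsw m (k-1))).length - l)
            = (phiW m (zsw m k)).take l := by
          rw [step1, heq, step2]
        -- alignment
        rcases phiW_align m (zsw m (k-1)) l hl1 (by omega) with hmis | ⟨u₂, hsuf, hlen2, hdrop⟩
        · apply hmis
          have h0 : ((phiW m (zsw m (k-1))).drop
              ((phiW m (zsw m (k-1))).length - l)).getD 0 0
              = (phiW m (zsw m (k-1))).getD ((phiW m (zsw m (k-1))).length - l) 0 := by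
            rw [getD_drop', Nat.add_zero]
          rw [← h0, E, getD_take' _ _ _ (by omega), phiW_getD_zero]
        · have htake : phiW m u₂ = (phiW m (zsw m k)).take (phiW m u₂).length := by
            rw [hlen2, ← E, hdrop]
          have hends : ∃ p₃, zsw m (k-1) = p₃ ++ [0] := by
            obtain ⟨u', hu'⟩ := zsw_last m (k-1) hm (by omega)
            have e : (k-1+1) % 2 = 0 := by omega
            rw [e] at hu'
            exact ⟨u', hu'⟩
          have hpre := code_core m hm (zsw m (k-1)) (zsw m k) u₂ hends hsuf
            (by omega) htake
          -- extract the lower-level coincidence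
          have hne2 : u₂ ≠ [] := by
            intro h
            rw [h, phiW_nil] at hlen2
            simp at hlen2
            omega
          have hj1 : 1 ≤ u₂.length := List.length_pos_iff.mpr hne2
          have hjk1 : u₂.length ≤ (zsw m (k-1)).length := hsuf.length_le
          have hjk : u₂.length ≤ (zsw m k).length := hpre.length_le
          have eq1 : (zsw m (k-1)).drop ((zsw m (k-1)).length - u₂.length) = u₂ := by
            obtain ⟨t, ht⟩ := hsuf
            rw [← ht]
            have e : (t ++ u₂).length - u₂.length = t.length := by simp
            rw [e, List.drop_left]
          have eq2 : (zsw m k).take u₂.length = u₂ := by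
            have := List.prefix_iff_eq_take.mp hpre
            exact this.symm
          have := ih (k-1) (by omega) (by omega) u₂.length hj1 hjk1
            (by rw [show k - 1 + 1 = k from by omega]; exact hjk)
          rw [show k - 1 + 1 = k from by omega] at this
          exact this (by rw [eq1, eq2])
      · -- k odd, k ≥ 3
        have hko : k % 2 = 1 := Nat.odd_iff.mp ho
        have hk3 : 3 ≤ k := by omega
        have hpalk := zsw_pal m hm k
        have hpalk1 := zsw_pal m hm (k+1)
        -- reversed equation
        have heq' : (zsw m k).take l = (zsw m (k+1)).drop ((zsw m (k+1)).length - l) := by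
          have := congrArg List.reverse heq
          rw [rev_drop_pal _ hpalk, rev_take_pal _ hpalk1] at this
          have e : (zsw m k).length - ((zsw m k).length - l) = l := by omega
          rwa [e] at this
        rcases Nat.lt_or_ge l (zsw m k).length with hllt | hlge
        · -- main case
          have hko1 : (k-1) % 2 = 0 := by omega
          have hu : phiW m (zsw m (k-1)) ++ [0] = zsw m k := by
            have hr := relW m hm (k-1)
            rw [deltaW_even _ hko1] at hr
            have e : k - 1 + 1 = k := by omega
            rw [e, deltaW_odd _ hko, List.nil_append] at hr
            exact hr
          have hv : phiW m (zsw m k) = [0] ++ zsw m (k+1) := by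
            have hr := relW m hm k
            rw [deltaW_odd _ hko, List.append_nil, deltaW_even _ (by omega)] at hr
            exact hr
          have lphiu : (phiW m (zsw m (k-1))).length + 1 = (zsw m k).length := by
            rw [← hu]
            simp
          have lphiv : (phiW m (zsw m k)).length = (zsw m (k+1)).length + 1 := by
            rw [hv]
            simp
          have hlk1' : l ≤ (zsw m (k+1)).length := hlk1
          have step1 : (zsw m k).take l = (phiW m (zsw m (k-1))).take l := by
            rw [← hu, List.take_append_of_le_length (by omega)]
          have step2 : (phiW m (zsw m k)).drop ((phiW m (zsw m k)).length - l)
              = (zsw m (k+1)).drop ((zsw m (k+1)).length - l) := by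
            rw [hv, List.singleton_append]
            have e : (0 :: zsw m (k+1)).length - l = ((zsw m (k+1)).length - l) + 1 := by
              simp
              omega
            rw [e, List.drop_succ_cons]
          have E : (phiW m (zsw m k)).drop ((phiW m (zsw m k)).length - l)
              = (phiW m (zsw m (k-1))).take l := by
            rw [step2, ← heq', step1]
          rcases phiW_align m (zsw m k) l hl1 (by omega) with hmis | ⟨v₂, hsuf, hlen2, hdrop⟩
          · apply hmis
            have h0 : ((phiW m (zsw m k)).drop ((phiW m (zsw m k)).length - l)).getD 0 0
                = (phiW m (zsw m k)).getD ((phiW m (zsw m k)).length - l) 0 := by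
              rw [getD_drop', Nat.add_zero]
            rw [← h0, E, getD_take' _ _ _ (by omega), phiW_getD_zero]
          · have htake : phiW m v₂ = (phiW m (zsw m (k-1))).take (phiW m v₂).length := by
              rw [hlen2, ← E, hdrop]
            have hends : ∃ p₃, zsw m k = p₃ ++ [0] := by
              obtain ⟨u', hu'⟩ := zsw_last m k hm (by omega)
              have e : (k+1) % 2 = 0 := by omega
              rw [e] at hu'
              exact ⟨u', hu'⟩
            have hpre := code_core m hm (zsw m k) (zsw m (k-1)) v₂ hends hsuf
              (by omega) htake
            have hne2 : v₂ ≠ [] := by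
              intro h
              rw [h, phiW_nil] at hlen2
              simp at hlen2
              omega
            have hj1 : 1 ≤ v₂.length := List.length_pos_iff.mpr hne2
            have hjk : v₂.length ≤ (zsw m k).length := hsuf.length_le
            have hjk1 : v₂.length ≤ (zsw m (k-1)).length := hpre.length_le
            have eq1 : (zsw m k).drop ((zsw m k).length - v₂.length) = v₂ := by
              obtain ⟨t, ht⟩ := hsuf
              rw [← ht]
              have e : (t ++ v₂).length - v₂.length = t.length := by simp
              rw [e, List.drop_left]
            have eq2 : (zsw m (k-1)).take v₂.length = v₂ := by
              exact (List.prefix_iff_eq_take.mp hpre).symm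
            -- reverse to the S shape at level k-1
            have hpalkm := zsw_pal m hm (k-1)
            have hfin : (zsw m (k-1)).drop ((zsw m (k-1)).length - v₂.length)
                = (zsw m k).take v₂.length := by
              have h1 : (zsw m (k-1)).take v₂.length
                  = (zsw m k).drop ((zsw m k).length - v₂.length) := by
                rw [eq1, eq2]
              have := congrArg List.reverse h1
              rw [rev_take_pal _ hpalkm, rev_drop_pal _ hpalk] at this
              have e : (zsw m k).length - ((zsw m k).length - v₂.length) = v₂.length := by
                omega
              rwa [e] at this
            have := ih (k-1) (by omega) (by omega) v₂.length hj1 hjk1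
              (by rw [show k - 1 + 1 = k from by omega]; exact hjk)
            rw [show k - 1 + 1 = k from by omega] at this
            exact this hfin
        · -- edge case l = |ζ k|
          have hleq : l = (zsw m k).length := by omega
          have h1 : ((zsw m k).take l).getD (l-1) 0 = 0 := by
            rw [getD_take' _ _ _ (by omega)]
            have := zsw_last_getD m k hm (by omega)
            rw [show (k+1) % 2 = 0 from by omega] at this
            rw [hleq, this]
          have h2 : ((zsw m (k+1)).drop ((zsw m (k+1)).length - l)).getD (l-1) 0 = 1 := by
            rw [getD_drop', Nat.add_zero]
            have e : (zsw m (k+1)).length - l + (l-1) = (zsw m (k+1)).length - 1 := by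
              omega
            rw [e]
            have := zsw_last_getD m (k+1) hm (by omega)
            rw [show (k+1+1) % 2 = 1 from by omega] at this
            rw [this]
          rw [heq'] at h1
          rw [h1] at h2
          exact absurd h2 (by omega)
-- === Part 8: the mismatch lemma ===
lemma getD_append_offset (u v : List ℕ) (i : ℕ) :
    (u ++ v).getD (u.length + i) 0 = v.getD i 0 := by
  rw [List.getD_append_right _ _ _ _ (by omega)]
  congr 1
  omega

lemma getD_append_self (u v : List ℕ) : (u ++ v).getD u.length 0 = v.getD 0 0 := by
  have := getD_append_offset u v 0
  rwa [Nat.add_zero] at this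

lemma W_shape (m b : ℕ) (hm : 2 ≤ m) (hb1 : 1 ≤ b) (hb2 : b ≤ m-1) :
    ∃ X, zsw m b ++ zsw m (b+1) = descZ m b b ++ ([b] ++ X) := by
  rcases Nat.lt_or_ge b 2 with h | h
  · have hb : b = 1 := by omega
    subst hb
    refine ⟨[], ?_⟩
    rw [zsw_one, zsw_two m hm]
    have : descZ m 1 1 = zsw m 1 := by
      unfold descZ
      rw [List.range_succ]
      simp
    rw [this, zsw_one]
    rfl
  · refine ⟨ascZ m 1 (b-1), ?_⟩
    rw [zsw_mid m (b+1) (by omega) (by omega)]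
    have e1 : b + 1 - 2 = b - 1 := by omega
    have e2 : b + 1 - 1 = b := by omega
    rw [e1, e2]
    obtain ⟨b', rfl⟩ : ∃ b', b = b' + 1 := ⟨b - 1, by omega⟩
    rw [descZ_cons]
    simp [List.append_assoc]

lemma mlem (m : ℕ) (hm : 2 ≤ m) : ∀ b, ∃ t,
    t < (zsw m b).length + (zsw m (b+1)).length ∧ t < (zsw m (b+2)).length ∧
    (zsw m b ++ zsw m (b+1)).getD t 0 ≠ (zsw m (b+2)).getD t 0 := by
  intro b
  induction b using Nat.strong_induction_on with
  | _ b ih =>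
    rcases Nat.lt_or_ge b 1 with hb0 | hb1
    · -- b = 0
      have : b = 0 := by omega
      subst this
      refine ⟨0, ?_, ?_, ?_⟩
      · rw [zsw_one]
        simp
      · rw [zsw_two m hm]
        simp
      · rw [zsw_zero, zsw_one, zsw_two m hm]
        simp
    · rcases Nat.lt_or_ge b m with hbm | hbm
      · -- 1 ≤ b ≤ m-1 : base cases
        obtain ⟨X, hX⟩ := W_shape m b hm hb1 (by omega)
        rcases Nat.lt_or_ge b (m-1) with hbm2 | hbm2
        · -- b ≤ m-2 : ζ(b+2) letter form
          have hY : zsw m (b+2) = descZ m b b ++ ([b+1] ++ ascZ m 1 b) := by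
            rw [zsw_mid m (b+2) (by omega) (by omega)]
            have e1 : b + 2 - 2 = b := by omega
            have e2 : b + 2 - 1 = b + 1 := by omega
            rw [e1, e2]
            simp [List.append_assoc]
          refine ⟨(descZ m b b).length, ?_, ?_, ?_⟩
          · have := congrArg List.length hX
            rw [List.length_append] at this
            simp at this
            omega
          · have := congrArg List.length hY
            simp at this
            omega
          · rw [hX, hY, getD_append_self, getD_append_self]
            simp
        · -- b = m-1 : ζ(b+2) = ζ(m+1)
          have hbm' : b = m - 1 := by omega
          have hY : zsw m (b+2) = descZ m b b ++ ([0] ++ ascZ m 2 (m-2)) := by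
            rw [zsw_gt m (b+2) hm (by omega)]
            have e1 : b + 2 - 2 = b := by omega
            have e2 : b + 2 - m = 1 := by omega
            have e3 : b + 2 - m - 1 = 0 := by omega
            have e4 : b + 2 - m + 1 = 2 := by omega
            rw [e1, e3, e4, e2, zsw_one, zsw_zero]
            have hd : descZ m b (m-2) ++ [0] = descZ m b (m-1) := by
              obtain ⟨M, rfl⟩ : ∃ M, m = M + 2 := ⟨m - 2, by omega⟩
              have e5 : M + 2 - 1 = M + 1 := by omega
              have e6 : M + 2 - 2 = M := by omega
              rw [e5, e6, descZ_succ]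
              have e7 : b - M = 1 := by omega
              rw [e7, zsw_one]
            have hbb : descZ m b (m-1) = descZ m b b := by
              congr 1
              omega
            calc descZ m b (m-2) ++ [0] ++ [] ++ [0] ++ ascZ m 2 (m-2)
                = (descZ m b (m-2) ++ [0]) ++ ([0] ++ ascZ m 2 (m-2)) := by
                  simp [List.append_assoc]
              _ = descZ m b b ++ ([0] ++ ascZ m 2 (m-2)) := by rw [hd, hbb]
          refine ⟨(descZ m b b).length, ?_, ?_, ?_⟩
          · have := congrArg List.length hX
            rw [List.length_append] at this
            simp at this
            omega
          · have := congrArg List.length hY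
            simp at this
            omega
          · rw [hX, hY, getD_append_self, getD_append_self]
            simp
            omega
      · -- step : b ≥ m
        obtain ⟨t', ht1, ht2, htne⟩ := ih (b-m) (by omega)
        set G := zsw m b ++ descZ m (b-1) (m-1) with hG
        have hWid : zsw m b ++ zsw m (b+1)
            = G ++ ((zsw m (b-m) ++ zsw m (b-m+1)) ++ ascZ m (b-m+2) (m-2)) := by
          rw [zsw_gt m (b+1) hm (by omega)]
          have e1 : b + 1 - 2 = b - 1 := by omega
          have e2 : b + 1 - m = b - m + 1 := by omega
          have e3 : b + 1 - m - 1 = b - m := by omega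
          have e4 : b + 1 - m + 1 = b - m + 2 := by omega
          rw [e1, e3, e4, e2]
          have hd : descZ m (b-1) (m-1) = descZ m (b-1) (m-2) ++ zsw m (b-m+1) := by
            obtain ⟨M, rfl⟩ : ∃ M, m = M + 2 := ⟨m - 2, by omega⟩
            have e5 : M + 2 - 1 = M + 1 := by omega
            have e6 : M + 2 - 2 = M := by omega
            rw [e5, e6, descZ_succ]
            have e7 : b - 1 - M = b - (M+2) + 1 := by omega
            rw [e7]
          rw [hG, hd]
          simp [List.append_assoc]
        have hYid : zsw m (b+2)
            = G ++ (zsw m (b-m+2) ++ ascZ m (b-m+3) (m-2)) := by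
          rw [zsw_gt m (b+2) hm (by omega)]
          have e1 : b + 2 - 2 = b := by omega
          have e2 : b + 2 - m = b - m + 2 := by omega
          have e3 : b + 2 - m - 1 = b - m + 1 := by omega
          have e4 : b + 2 - m + 1 = b - m + 3 := by omega
          rw [e1, e3, e4, e2]
          rcases Nat.lt_or_ge m 3 with hm2 | hm3
          · -- m = 2
            have : m = 2 := by omega
            subst this
            simp only [show (2:ℕ) - 2 = 0 from rfl, descZ_zero, ascZ_zero]
            have hd1 : descZ 2 (b-1) 1 = zsw 2 (b-1) := by
              unfold descZ
              rw [List.range_succ]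
              simp
            have e5 : b - 2 + 2 = b := by omega
            have e6 : b - 2 + 1 = b - 1 := by omega
            rw [hG, hd1, e5, e6]
            simp [List.append_assoc]
          · -- m ≥ 3
            have hd : descZ m b (m-2) = zsw m b ++ descZ m (b-1) (m-3) := by
              obtain ⟨M, rfl⟩ : ∃ M, m = M + 3 := ⟨m - 3, by omega⟩
              have e5 : M + 3 - 2 = M + 1 := by omega
              have e6 : M + 3 - 3 = M := by omega
              rw [e5, e6, descZ_cons]
            have hd2 : descZ m (b-1) (m-1)
                = descZ m (b-1) (m-3) ++ zsw m (b-m+2) ++ zsw m (b-m+1) := by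
              obtain ⟨M, rfl⟩ : ∃ M, m = M + 3 := ⟨m - 3, by omega⟩
              have e5 : M + 3 - 1 = (M + 1) + 1 := by omega
              have e6 : M + 3 - 3 = M := by omega
              rw [e5, e6, descZ_succ, descZ_succ]
              have e7 : b - 1 - M = b - (M+3) + 2 := by omega
              have e8 : b - 1 - (M+1) = b - (M+3) + 1 := by omega
              rw [e7, e8]
            rw [hG, hd, hd2]
            simp [List.append_assoc]
        refine ⟨G.length + t', ?_, ?_, ?_⟩
        · have := congrArg List.length hWid
          rw [List.length_append] at this
          simp only [List.length_append] at this
          omega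
        · have := congrArg List.length hYid
          simp only [List.length_append] at this
          omega
        · rw [hWid, hYid, getD_append_offset, getD_append_offset]
          rw [List.getD_append _ _ _ _ (by rw [List.length_append]; omega)]
          rw [List.getD_append _ _ _ _ ht2]
          exact htne
-- === Part 9: final assembly ===
lemma take_append_offset (u v : List ℕ) (i : ℕ) :
    (u ++ v).take (u.length + i) = u ++ v.take i := by
  rw [List.take_append, List.take_of_length_le (by omega)]
  congr 2
  omega

/-- Let `n ≥ m-1` and let `w` be a non-empty common finite prefix of the infinite words
`z_{n-(m-1)} · Q(n+1) Q(n+2) Q(n+3) ⋯` and `Q(n+2) Q(n+3) Q(n+4) ⋯` (equivalently, `w`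
is a prefix of some finite truncation of each of them). Then `Q(n+1) · w` is not a
palindrome. -/
theorem Qword_append_not_pal (m : ℕ) (hm : 2 ≤ m) (n : ℕ) (hn : m - 1 ≤ n)
    (w : List ℕ) (hw : w ≠ [])
    (h1 : ∃ T, w <+: zsw m (n + 2 - m)
      ++ (((List.range T).map (fun j => Qword m (n + 1 + j))).flatten))
    (h2 : ∃ T, w <+: (((List.range T).map (fun j => Qword m (n + 2 + j))).flatten)) :
    ¬ Pal (Qword m (n + 1) ++ w) := by
  intro hpal
  set b := n + 2 - m with hbdef
  have hbm : b + m = n + 2 := by omega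
  have hb1 : 1 ≤ b := by omega
  -- Q structure
  have QA : Qword m (n+1) = ascZ m (b+1) (m-1) ++ zsw m (n+2) ++ descZ m (n+1) (m-1) := by
    unfold Qword
    have e0 : n + 1 + 1 = n + 2 := by omega
    rw [e0]
    congr 1
    congr 1
    unfold ascZ
    congr 1
    apply List.map_congr_left
    intro j _
    congr 1
    omega
  -- Pal Q
  have palQ : (Qword m (n+1)).reverse = Qword m (n+1) := by
    rw [QA]
    rw [List.append_assoc, List.reverse_append, List.reverse_append]
    rw [descZ_rev m (n+1) (m-1) (by omega) (fun t ht => zsw_pal m hm _)]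
    rw [ascZ_rev m (b+1) (m-1) (fun t ht => zsw_pal m hm _)]
    rw [zsw_pal m hm]
    have e1 : n + 1 + 1 - (m-1) = b + 1 := by omega
    have e2 : b + 1 + (m-1) - 1 = n + 1 := by omega
    rw [e1, e2, List.append_assoc]
  -- prefix structure of Q
  have Qpre : ∃ RQ, Qword m (n+1) = zsw m (b+1) ++ (zsw m (b+2) ++ RQ) := by
    rcases Nat.lt_or_ge m 3 with hm2 | hm3
    · have hm' : m = 2 := by omega
      subst hm'
      refine ⟨descZ 2 (n+1) 1, ?_⟩
      rw [QA]
      have e1 : (2:ℕ) - 1 = 1 := rfl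
      rw [e1, ascZ_one]
      have e2 : n + 2 = b + 2 := by omega
      rw [e2, List.append_assoc]
    · refine ⟨ascZ m (b+3) (m-3) ++ zsw m (n+2) ++ descZ m (n+1) (m-1), ?_⟩
      rw [QA]
      obtain ⟨M, hM⟩ : ∃ M, m = M + 3 := ⟨m - 3, by omega⟩
      have e1 : m - 1 = (M + 1) + 1 := by omega
      have e2 : m - 3 = M := by omega
      rw [e1, e2, ascZ_cons, ascZ_cons]
      have e3 : b + 1 + 1 = b + 2 := by omega
      have e4 : b + 1 + 1 + 1 = b + 3 := by omega
      rw [e3, e4]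
      simp [List.append_assoc]
  -- prefix structure of Q(n+2)
  have Q2pre : ∃ R2, Qword m (n+2) = zsw m (b+2) ++ R2 := by
    refine ⟨ascZ m (b+3) (m-2) ++ zsw m (n+3) ++ descZ m (n+2) (m-1), ?_⟩
    unfold Qword
    have e0 : n + 2 + 1 = n + 3 := by omega
    rw [e0]
    have hasc : ((List.range (m-1)).map (fun j => zsw m (n + 2 + 2 - m + j))).flatten
        = ascZ m (b+2) (m-1) := by
      unfold ascZ
      congr 1
      apply List.map_congr_left
      intro j _
      congr 1
      omega
    rw [hasc]
    obtain ⟨M, hM⟩ : ∃ M, m = M + 2 := ⟨m - 2, by omega⟩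
    have e1 : m - 1 = M + 1 := by omega
    have e2 : m - 2 = M := by omega
    rw [e1, e2, ascZ_cons]
    have e3 : b + 2 + 1 = b + 3 := by omega
    rw [e3]
    simp only [List.append_assoc, List.append_cancel_left_eq]
    unfold descZ
    simp [List.append_assoc]
  -- common prefix facts
  have hP1 : ∃ s₁, w <+: zsw m b ++ (zsw m (b+1) ++ (zsw m (b+2) ++ s₁)) := by
    obtain ⟨T, hT⟩ := h1
    cases T with
    | zero =>
      refine ⟨[], ?_⟩
      simp only [List.range_zero, List.map_nil, List.flatten_nil, List.append_nil] at hT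
      exact hT.trans (List.prefix_append _ _)
    | succ T' =>
      obtain ⟨RQ, hRQ⟩ := Qpre
      rw [List.range_succ_eq_map, List.map_cons, List.flatten_cons] at hT
      rw [Nat.add_zero] at hT
      refine ⟨RQ ++ (List.map (fun j => Qword m (n + 1 + j)) (List.map Nat.succ (List.range T'))).flatten, ?_⟩
      rw [hRQ] at hT
      simpa [List.append_assoc] using hT
  have hP2 : ∃ s₂, w <+: zsw m (b+2) ++ s₂ := by
    obtain ⟨T, hT⟩ := h2
    cases T with
    | zero =>
      exfalso
      simp only [List.range_zero, List.map_nil, List.flatten_nil] at hT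
      exact hw (List.prefix_nil.mp hT)
    | succ T' =>
      obtain ⟨R2, hR2⟩ := Q2pre
      rw [List.range_succ_eq_map, List.map_cons, List.flatten_cons] at hT
      rw [Nat.add_zero] at hT
      refine ⟨R2 ++ (List.map (fun j => Qword m (n + 2 + j)) (List.map Nat.succ (List.range T'))).flatten, ?_⟩
      rw [hR2] at hT
      simpa [List.append_assoc] using hT
  set l := w.length with hldef
  have hl1 : 1 ≤ l := List.length_pos_iff.mpr hw
  obtain ⟨t, ht1, ht2, htne⟩ := mlem m hm b
  -- l ≤ t
  have hlt : l ≤ t := by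
    by_contra hgt
    push_neg at hgt
    obtain ⟨s₁, hp1⟩ := hP1
    obtain ⟨s₂, hp2⟩ := hP2
    have a1 : w.getD t 0 = (zsw m b ++ zsw m (b+1)).getD t 0 := by
      have := prefix_getD w _ hp1 t (by omega)
      rw [this, ← List.append_assoc, ← List.append_assoc]
      rw [List.append_assoc (zsw m b ++ zsw m (b+1))]
      rw [List.getD_append _ _ _ _ (by rw [List.length_append]; omega)]
    have a2 : w.getD t 0 = (zsw m (b+2)).getD t 0 := by
      have := prefix_getD w _ hp2 t (by omega)
      rw [this, List.getD_append _ _ _ _ ht2]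
    exact htne (a1 ▸ a2 ▸ rfl)
  have hlW : l < (zsw m b).length + (zsw m (b+1)).length := by omega
  have hlY : l < (zsw m (b+2)).length := by omega
  -- w = take l ζ(b+2)
  have hwEq : w = (zsw m (b+2)).take l := by
    obtain ⟨s₂, hp2⟩ := hP2
    have := List.prefix_iff_eq_take.mp hp2
    rw [this, List.take_append_of_le_length (by omega)]
  -- palindrome gives: w.reverse = Q.take l
  have hrev : w.reverse = (Qword m (n+1)).take l := by
    unfold Pal at hpal
    rw [List.reverse_append, palQ] at hpal
    have h := congrArg (List.take l) hpal
    rw [List.take_append_of_le_length (by simp; omega), List.take_append_of_le_length (by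
      obtain ⟨RQ, hRQ⟩ := Qpre
      rw [hRQ, List.length_append, List.length_append]
      omega)] at h
    rw [List.take_of_length_le (by simp; omega)] at h
    exact h
  obtain ⟨RQ, hRQ⟩ := Qpre
  have hmono1 : (zsw m b).length ≤ (zsw m (b+1)).length := zsw_len_mono m b hm hb1
  have hmono2 : (zsw m (b+1)).length ≤ (zsw m (b+2)).length := zsw_len_mono m (b+1) hm (by omega)
  have hpal2 := zsw_pal m hm (b+2)
  have hpal1 := zsw_pal m hm (b+1)
  rcases le_or_gt l (zsw m (b+1)).length with hc1 | hc2
  · -- case l ≤ |ζ(b+1)|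
    have hQt : (Qword m (n+1)).take l = (zsw m (b+1)).take l := by
      rw [hRQ, List.take_append_of_le_length hc1]
    have hA : ((zsw m (b+2)).take l).reverse = (zsw m (b+1)).take l := by
      rw [← hwEq, hrev, hQt]
    rw [rev_take_pal _ hpal2] at hA
    -- reverse to S-shape
    have hB : (zsw m (b+1)).drop ((zsw m (b+1)).length - l) = (zsw m (b+2)).take l := by
      have := congrArg List.reverse hA
      rw [rev_drop_pal _ hpal2, rev_take_pal _ hpal1] at this
      have e : (zsw m (b+2)).length - ((zsw m (b+2)).length - l) = l := by omega
      rw [e] at this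
      exact this.symm
    exact slem m hm (b+1) (by omega) l hl1 hc1
      (by rw [show b+1+1 = b+2 from rfl]; omega) hB
  · -- case |ζ(b+1)| < l
    set l' := l - (zsw m (b+1)).length with hl'def
    have hl'1 : 1 ≤ l' := by omega
    have hl'b : l' < (zsw m b).length := by omega
    set lam := (zsw m b).length - l' with hlamdef
    have hlam1 : 1 ≤ lam := by omega
    have hE : w.reverse = zsw m (b+1) ++ (zsw m (b+2)).take l' := by
      rw [hrev, hRQ]
      have e : l = (zsw m (b+1)).length + l' := by omega
      rw [e, take_append_offset, List.take_append_of_le_length (by omega)]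
    have HH : (zsw m (b+2)).take l
        = (zsw m (b+2)).drop ((zsw m (b+2)).length - l') ++ zsw m (b+1) := by
      have := congrArg List.reverse hE
      rw [List.reverse_reverse, hwEq] at this
      rw [this, List.reverse_append, rev_take_pal _ hpal2, hpal1]
    have HH2 : ((zsw m (b+2)).drop l').take (zsw m (b+1)).length = zsw m (b+1) := by
      have h := congrArg (List.drop l') HH
      rw [List.drop_take (i := l') (j := l) (l := zsw m (b+2))] at h
      have e1 : l - l' = (zsw m (b+1)).length := by omega
      rw [e1] at h
      have hRHS : ((zsw m (b+2)).drop ((zsw m (b+2)).length - l') ++ zsw m (b+1)).drop l'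
          = zsw m (b+1) := by
        set D := (zsw m (b+2)).drop ((zsw m (b+2)).length - l') with hDdef
        have hD : D.length = l' := by
          rw [hDdef, List.length_drop]
          omega
        rw [← hD, List.drop_left]
      rw [hRHS] at h
      exact h
    -- restrict to the ζ b window
    obtain ⟨r, hr⟩ := zsw_pre m b hm hb1
    have HH3 : (zsw m b).drop l' = (zsw m (b+1)).take lam := by
      have h := congrArg (List.take lam) HH2
      rw [List.take_take, min_eq_left (by omega)] at h
      rw [hr, List.drop_append_of_le_length (by omega)] at h
      have hdl : ((zsw m b).drop l').length = lam := by
        rw [List.length_drop]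
      rw [List.take_append_of_le_length (by omega), List.take_of_length_le (by omega)] at h
      exact h
    have hfin : (zsw m b).drop ((zsw m b).length - lam) = (zsw m (b+1)).take lam := by
      have e : (zsw m b).length - lam = l' := by omega
      rw [e]
      exact HH3
    exact slem m hm b hb1 lam hlam1 (by omega) (by omega) hfin
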